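/- arXiv:1904.02937 — 2 statements merged into one kernel-verified Lean document; each statement's English description precedes it below -/
import Mathlib

section
/- Let X be a topological space, s a natural number, and Z' ⊆ X a closed subset with codim(Z', X) ≥ s. Then for any two distinct irreducible components Z'_i ≠ Z'_j of Z', one has codim(Z'_i ∩ Z'_j, X) ≥ s + 1. -/
open Set

/-- The codimension of an irreducible closed subset `Z` of a topological space `X`:
the supremum of all `s : ℕ` such that there is a chain
`Z = Z_s ⊊ Z_{s-1} ⊊ … ⊊ Z_0 ⊆ X` of nonempty irreducible closed subsets of `X`. -/
noncomputable def irredCodim {X : Type*} [TopologicalSpace X] (Z : Set X) : ℕ∞ :=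
  sSup {n : ℕ∞ | ∃ s : ℕ, n = (s : ℕ∞) ∧ ∃ c : Fin (s + 1) → Set X,
    c 0 = Z ∧ StrictMono c ∧ ∀ i, IsClosed (c i) ∧ IsIrreducible (c i)}

/-- The irreducible components of a subset `Z` of a topological space `X`, i.e. the
maximal irreducible subsets of `Z`. -/
def irredComponentsIn {X : Type*} [TopologicalSpace X] (Z : Set X) : Set (Set X) :=
  {C | Maximal (fun T => T ⊆ Z ∧ IsIrreducible T) C}

/-- The codimension of an arbitrary closed subset `Z ⊆ X`: the infimum of the
codimensions of the irreducible components of `Z`; by convention `codim(∅, X) = ∞`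
(the infimum of the empty set in `ℕ∞`). -/
noncomputable def setCodim {X : Type*} [TopologicalSpace X] (Z : Set X) : ℕ∞ :=
  sInf (irredCodim '' irredComponentsIn Z)

-- components of a closed set are closed
lemma comp_closed {X : Type*} [TopologicalSpace X] {Z : Set X} (hZ : IsClosed Z)
    {C : Set X} (hC : C ∈ irredComponentsIn Z) : IsClosed C := by
  have h1 : closure C ⊆ Z := hZ.closure_subset_iff.2 hC.1.1
  have h2 : IsIrreducible (closure C) := hC.1.2.closure
  have := hC.2 ⟨h1, h2⟩ subset_closure
  rw [← closure_eq_iff_isClosed]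
  exact le_antisymm this subset_closure

-- extract a chain from irredCodim ≥ s
lemma exists_chain {X : Type*} [TopologicalSpace X] {Z : Set X} (hcl : IsClosed Z)
    (hirr : IsIrreducible Z) {s : ℕ} (h : (s : ℕ∞) ≤ irredCodim Z) :
    ∃ c : Fin (s + 1) → Set X,
      c 0 = Z ∧ StrictMono c ∧ ∀ i, IsClosed (c i) ∧ IsIrreducible (c i) := by
  rcases s with - | k
  · exact ⟨fun _ => Z, rfl, by rw [Fin.strictMono_iff_lt_succ]; exact fun i => i.elim0, fun _ => ⟨hcl, hirr⟩⟩
  · have hlt : (k : ℕ∞) < irredCodim Z := lt_of_lt_of_le (by exact_mod_cast Nat.lt_succ_self k) h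
    rw [irredCodim, lt_sSup_iff] at hlt
    obtain ⟨n, ⟨t, rfl, c, hc0, hmono, hci⟩, hkn⟩ := hlt
    have htk : k + 1 ≤ t := by exact_mod_cast hkn
    refine ⟨fun i => c (Fin.castLE (Nat.succ_le_succ htk) i), hc0, hmono.comp (Fin.strictMono_castLE _),
      fun i => hci _⟩

lemma le_irredCodim_of_chain {X : Type*} [TopologicalSpace X] {Z : Set X} {s : ℕ}
    (c : Fin (s + 1) → Set X) (hc0 : c 0 = Z) (hmono : StrictMono c)
    (hci : ∀ i, IsClosed (c i) ∧ IsIrreducible (c i)) : (s : ℕ∞) ≤ irredCodim Z :=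
  le_sSup ⟨s, rfl, c, hc0, hmono, hci⟩


/-- Let `X` be a topological space, `s` a natural number, and `Z' ⊆ X` a closed subset
with `codim(Z', X) ≥ s`.  Then for any two distinct irreducible components
`Z'_i ≠ Z'_j` of `Z'`, one has `codim(Z'_i ∩ Z'_j, X) ≥ s + 1`. -/
theorem stmt4 {X : Type*} [TopologicalSpace X] (s : ℕ) (Z' : Set X)
    (hcl : IsClosed Z') (hcodim : (s : ℕ∞) ≤ setCodim Z')
    (C D : Set X) (hC : C ∈ irredComponentsIn Z') (hD : D ∈ irredComponentsIn Z')
    (hCD : C ≠ D) :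
    (s : ℕ∞) + 1 ≤ setCodim (C ∩ D) := by
  have hCcl : IsClosed C := comp_closed hcl hC
  have hDcl : IsClosed D := comp_closed hcl hD
  have hCD' : IsClosed (C ∩ D) := hCcl.inter hDcl
  -- codim C ≥ s
  have hsC : (s : ℕ∞) ≤ irredCodim C :=
    le_trans hcodim (sInf_le ⟨C, hC, rfl⟩)
  obtain ⟨c, hc0, hmono, hci⟩ := exists_chain hCcl hC.1.2 hsC
  refine le_sInf ?_
  rintro _ ⟨E, hE, rfl⟩
  have hEcl : IsClosed E := comp_closed hCD' hE
  have hEC : E ⊂ C := by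
    refine ⟨hE.1.1.trans inter_subset_left, fun hsub => hCD ?_⟩
    have hCD2 : C ⊆ D := (hE.1.1.trans inter_subset_right).trans' hsub
    exact le_antisymm (hC.2 ⟨hD.1.1, hD.1.2⟩ hCD2) hCD2 |>.symm ▸ rfl
  -- build extended chain
  have key : ((s + 1 : ℕ) : ℕ∞) ≤ irredCodim E := by
    refine le_irredCodim_of_chain (Fin.cases E c) (Fin.cases_zero ..) ?_ ?_
    · rw [Fin.strictMono_iff_lt_succ]
      intro i
      induction i using Fin.cases with
      | zero =>
        rw [Fin.castSucc_zero, Fin.cases_zero, Fin.cases_succ, hc0]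
        exact hEC
      | succ j =>
        rw [← Fin.succ_castSucc]
        simpa using hmono (Fin.castSucc_lt_succ : Fin.castSucc j < j.succ)
    · intro i
      induction i using Fin.cases with
      | zero => exact ⟨hEcl, hE.1.2⟩
      | succ j => simpa using hci j
  calc (s : ℕ∞) + 1 = ((s + 1 : ℕ) : ℕ∞) := by push_cast; ring
    _ ≤ irredCodim E := key
end

section
/- Fix an integer d ≥ 0. Suppose given abelian groups A_s^m for integers m and 0 ≤ s ≤ d + 1 with A_{d+1}^m = 0 for all m, abelian groups B_s^m for 0 ≤ s ≤ d, and homomorphisms α_s^m : A_{s+1}^m → A_s^m, β_s^m : A_s^m → B_s^m, γ_s^m : B_s^m → A_{s+1}^{m+1}, such that for each s with 0 ≤ s ≤ d the sequence ⋯ → A_{s+1}^m →(α_s^m) A_s^m →(β_s^m) B_s^m →(γ_s^m) A_{s+1}^{m+1} →(α_s^{m+1}) A_s^{m+1} → ⋯ is exact. Fix an integer n, and define e := β_0^n : A_0^n → B_0^n and, for 0 ≤ s ≤ d − 1, d^s := β_{s+1}^{n+s+1} ∘ γ_s^{n+s} : B_s^{n+s} → B_{s+1}^{n+s+1}. Let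 0 ≤ s ≤ d, and suppose that α_{s+1}^{n+s+1} : A_{s+2}^{n+s+1} → A_{s+1}^{n+s+1} is the zero map (this is automatic for s = d, d − 1 being vacuous or A_{d+1} = 0 appropriately interpreted via setting A_t = 0 and α zero for t > d) and that, if s ≥ 1, α_{s-1}^{n+s} : A_s^{n+s} → A_{s-1}^{n+s} is the zero map. Then the complex 0 → A_0^n →(e) B_0^n →(d^0) B_1^{n+1} → ⋯ →(d^{d-1}) B_d^{n+d} → 0 is exact at the spot B_s^{n+s}; that is, ker(d^s) = im(d^{s-1}) for 1 ≤ s ≤ d − 1, ker(d^0) = im(e) for s = 0, and B_d^{n+d} = im(d^{d-1}) for s = d (when d ≥ 1). -/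
/-- Fix `d ≥ 0`.  Given abelian groups `A_s^m` (for `0 ≤ s ≤ d + 1`, with
`A_{d+1}^m = 0`, and `A_t` interpreted as `0` for `t > d`), abelian groups `B_s^m`
(for `0 ≤ s ≤ d`), and homomorphisms `α_s^m : A_{s+1}^m → A_s^m`,
`β_s^m : A_s^m → B_s^m`, `γ_s^m : B_s^m → A_{s+1}^{m+1}` such that for each
`0 ≤ s ≤ d` the long sequence
`⋯ → A_{s+1}^m → A_s^m → B_s^m → A_{s+1}^{m+1} → A_s^{m+1} → ⋯` is exact.
Fix `n`, set `e := β_0^n` and `d^s := β_{s+1}^{n+s+1} ∘ γ_s^{n+s}`.  Let `0 ≤ s ≤ d`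
and suppose `α_{s+1}^{n+s+1}` is the zero map, and, if `s ≥ 1`, also
`α_{s-1}^{n+s}` is the zero map.  Then the complex
`0 → A_0^n → B_0^n → B_1^{n+1} → ⋯ → B_d^{n+d} → 0` is exact at the spot
`B_s^{n+s}`: `ker(d^s) = im(d^{s-1})` for `1 ≤ s ≤ d - 1`, `ker(d^0) = im(e)` for
`s = 0` (and `e` surjective if moreover `d = 0`), and `B_d^{n+d} = im(d^{d-1})`
for `s = d` with `d ≥ 1`. -/
theorem stmt8 (d : ℕ) (n : ℤ) (s : ℕ) (hs : s ≤ d)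
    (A : ℕ → ℤ → Type*) [∀ t m, AddCommGroup (A t m)]
    (B : ℕ → ℤ → Type*) [∀ t m, AddCommGroup (B t m)]
    (htriv : ∀ m : ℤ, ∀ x : A (d + 1) m, x = 0)
    (α : ∀ (t : ℕ) (m : ℤ), A (t + 1) m →+ A t m)
    (β : ∀ (t : ℕ) (m : ℤ), A t m →+ B t m)
    (γ : ∀ (t : ℕ) (m : ℤ), B t m →+ A (t + 1) (m + 1))
    (hex1 : ∀ t ≤ d, ∀ m : ℤ, Function.Exact ⇑(α t m) ⇑(β t m))
    (hex2 : ∀ t ≤ d, ∀ m : ℤ, Function.Exact ⇑(β t m) ⇑(γ t m))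
    (hex3 : ∀ t ≤ d, ∀ m : ℤ, Function.Exact ⇑(γ t m) ⇑(α t (m + 1)))
    -- `α_{s+1}^{n+s+1} : A_{s+2}^{n+s+1} → A_{s+1}^{n+s+1}` is the zero map:
    (hα1 : ∀ x : A (s + 1 + 1) (n + s + 1), α (s + 1) (n + s + 1) x = 0)
    -- if `s ≥ 1`, then `α_{s-1}^{n+s} : A_s^{n+s} → A_{s-1}^{n+s}` is the zero map:
    (hα2 : ∀ t : ℕ, s = t + 1 → ∀ x : A (t + 1) (n + s), α t (n + s) x = 0) :
    -- exactness at the spot `B_s^{n+s}`: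
    (s = 0 → d = 0 → Function.Surjective ⇑(β 0 n)) ∧
    (s = 0 → 1 ≤ d →
      Function.Exact ⇑(β 0 n) ⇑((β 1 (n + 1)).comp (γ 0 n))) ∧
    (∀ t : ℕ, s = t + 1 → s + 1 ≤ d →
      Function.Exact ⇑((β (t + 1) (n + t + 1)).comp (γ t (n + t)))
        ⇑((β (t + 1 + 1) (n + t + 1 + 1)).comp (γ (t + 1) (n + t + 1)))) ∧
    (∀ t : ℕ, s = t + 1 → s = d →
      Function.Surjective ⇑((β (t + 1) (n + t + 1)).comp (γ t (n + t)))) := by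
  have Hα1 : ∀ m : ℤ, m = n + s + 1 → ∀ x : A (s + 1 + 1) m, α (s + 1) m x = 0 := by
    intro m hm; subst hm; exact hα1
  have Hα2 : ∀ m : ℤ, m = n + s → ∀ t : ℕ, s = t + 1 →
      ∀ x : A (t + 1) m, α t m x = 0 := by
    intro m hm; subst hm; exact hα2
  clear hα1 hα2
  refine ⟨?_, ?_, ?_, ?_⟩
  · -- s = 0, d = 0 : e = β 0 n surjective
    intro hs0 hd0
    subst hs0; subst hd0
    intro b
    have h1 : γ 0 n b = 0 := htriv _ _
    exact (hex2 0 le_rfl n b).mp h1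
  · -- s = 0, 1 ≤ d : exactness at B_0
    intro hs0 hd1
    subst hs0
    intro b
    simp only [AddMonoidHom.coe_comp, Function.comp_apply]
    constructor
    · intro hb
      obtain ⟨a, ha⟩ := (hex1 1 hd1 (n + 1) (γ 0 n b)).mp hb
      have h0 : γ 0 n b = 0 := by
        rw [← ha, Hα1 (n + 1) (by push_cast; ring) a]
      exact (hex2 0 (le_trans (Nat.zero_le 1) hd1) n b).mp h0
    · rintro ⟨a, rfl⟩
      rw [(hex2 0 (le_trans (Nat.zero_le 1) hd1) n (β 0 n a)).mpr ⟨a, rfl⟩,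
        map_zero]
  · -- middle exactness
    intro t hst hsd
    subst hst
    have hd2 : t + 1 + 1 ≤ d := hsd
    have hd1 : t + 1 ≤ d := le_trans (Nat.le_succ _) hd2
    have hd0 : t ≤ d := le_trans (Nat.le_succ _) hd1
    intro b
    simp only [AddMonoidHom.coe_comp, Function.comp_apply]
    constructor
    · intro hb
      obtain ⟨a, ha⟩ := (hex1 (t + 1 + 1) hd2 (n + t + 1 + 1) _).mp hb
      have h0 : γ (t + 1) (n + t + 1) b = 0 := by
        rw [← ha, Hα1 (n + t + 1 + 1) (by push_cast; ring) a]
      obtain ⟨a', ha'⟩ := (hex2 (t + 1) hd1 (n + t + 1) b).mp h0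
      have h0' : α t (n + t + 1) a' = 0 :=
        Hα2 (n + t + 1) (by push_cast; ring) t rfl a'
      obtain ⟨b', hb'⟩ := (hex3 t hd0 (n + t) a').mp h0'
      exact ⟨b', by simp only [Function.comp_apply]; rw [hb', ha']⟩
    · rintro ⟨b', rfl⟩
      have h0 : γ (t + 1) (n + t + 1) (β (t + 1) (n + t + 1) (γ t (n + t) b')) = 0 :=
        (hex2 (t + 1) hd1 (n + t + 1) _).mpr ⟨_, rfl⟩
      simp only [Function.comp_apply]
      rw [h0, map_zero]
  · -- right end surjectivity
    intro t hst hsd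
    subst hst
    have hd : d = t + 1 := hsd.symm
    subst hd
    intro b
    have h0 : γ (t + 1) (n + t + 1) b = 0 := htriv _ _
    obtain ⟨a, ha⟩ := (hex2 (t + 1) le_rfl (n + t + 1) b).mp h0
    have h0' : α t (n + t + 1) a = 0 :=
      Hα2 (n + t + 1) (by push_cast; ring) t rfl a
    obtain ⟨b', hb'⟩ := (hex3 t (Nat.le_succ t) (n + t) a).mp h0'
    exact ⟨b', by simp only [AddMonoidHom.coe_comp, Function.comp_apply]; rw [hb', ha]⟩
end
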